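/- Let n ∈ ℕ, let α₁, …, αₙ, x be nonzero complex numbers, and let y ∈ ℂ satisfy y² = x·∏_{i=1}^{n}(x − αᵢ)(x − αᵢ⁻¹)(x − conj(αᵢ))(x − conj(αᵢ)⁻¹). Set z = x + x⁻¹, λᵢ = αᵢ + αᵢ⁻¹, and w₊ = (x + 1)·y / x^{n+1}. Then w₊² = (z + 2)·∏_{i=1}^{n}(z − λᵢ)(z − conj(λᵢ)). (This is the identification of the quotient map q₊ : X → C₊ from the even-genus spectral curve X to the curve C₊.) -/

import Mathlib

open ComplexConjugate

/-- Identification of the quotient map `q₊ : X → C₊` for the even-genus spectral curve: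
if `y² = x·∏ᵢ (x−αᵢ)(x−αᵢ⁻¹)(x−conj αᵢ)(x−(conj αᵢ)⁻¹)`, then with `z = x + x⁻¹`,
`λᵢ = αᵢ + αᵢ⁻¹`, `w₊ = (x+1)y / x^(n+1)`, we have
`w₊² = (z+2)·∏ᵢ (z−λᵢ)(z−conj λᵢ)`. -/
theorem stmt_2 (n : ℕ) (α : Fin n → ℂ) (hα : ∀ i, α i ≠ 0)
    (x : ℂ) (hx : x ≠ 0) (y : ℂ)
    (hy : y ^ 2 = x *
      ∏ i : Fin n, (x - α i) * (x - (α i)⁻¹) * (x - conj (α i)) * (x - (conj (α i))⁻¹))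
    (z : ℂ) (l : Fin n → ℂ)
    (hz : z = x + x⁻¹) (hl : ∀ i, l i = α i + (α i)⁻¹)
    (w : ℂ) (hw : w = (x + 1) * y / x ^ (n + 1)) :
    w ^ 2 = (z + 2) * ∏ i : Fin n, (z - l i) * (z - conj (l i)) := by
  have key : ∀ i : Fin n, (z - l i) * (z - conj (l i)) =
      ((x - α i) * (x - (α i)⁻¹) * (x - conj (α i)) * (x - (conj (α i))⁻¹)) / x ^ 2 := by
    intro i
    have hαi := hα i
    have hcαi : conj (α i) ≠ 0 := by
      simpa using (RingHom.injective (starRingEnd ℂ)).ne_iff.mpr hαi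
    rw [hz, hl, map_add, map_inv₀]
    field_simp
    ring
  rw [Finset.prod_congr rfl fun i _ => key i, Finset.prod_div_distrib,
    Finset.prod_const, Finset.card_univ, Fintype.card_fin, hw, div_pow, mul_pow, hy, hz]
  have hxp : (x : ℂ) ^ (n + 1) ≠ 0 := pow_ne_zero _ hx
  field_simp
  ring
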